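/- arXiv:2112.07184 — 4 statements merged into one kernel-verified Lean document; each statement's English description precedes it below -/
import Mathlib

section
/- Let ℓ be a proper loss with 0 ≤ ℓ(y,p) ≤ B. Fix a sequence of outcomes y₁,…,y_T ∈ {0,1} and predictions p₁,…,p_T taking values in {0, 1/N, …, 1}. For each i, let T_i = #{t : p_t = i/N} and ρ(i) = (Σ_{t: p_t = i/N} y_t)/T_i (when T_i > 0). Then for any i with T_i > 0 and any j ∈ {0,…,N}, Σ_{t: p_t = i/N} (ℓ(y_t, i/N) - ℓ(y_t, j/N)) ≤ 2B·T_i·|ρ(i) - i/N|. -/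
open Finset

/-- Internal-regret switching gain bound for a proper bounded loss:
for any prediction index `i` played a positive number of times and any alternative `j`,
the gain from retrospectively switching all plays of `i/N` to `j/N` is at most
`2 B T_i |ρ(i) - i/N|`. -/
theorem switching_gain_le (N T : ℕ) (ℓ : ℝ → ℝ → ℝ) (B : ℝ)
    (y : Fin T → ℝ) (hy : ∀ t, y t = 0 ∨ y t = 1)
    (pred : Fin T → Fin (N + 1))
    (hproper : ∀ p ∈ Set.Icc (0:ℝ) 1, ∀ q ∈ Set.Icc (0:ℝ) 1,
      p * ℓ 1 p + (1 - p) * ℓ 0 p ≤ p * ℓ 1 q + (1 - p) * ℓ 0 q)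
    (hbound : ∀ y' ∈ ({0, 1} : Set ℝ), ∀ p ∈ Set.Icc (0:ℝ) 1, 0 ≤ ℓ y' p ∧ ℓ y' p ≤ B)
    (hN : 0 < N) :
    ∀ i j : Fin (N + 1),
      0 < ({t | pred t = i} : Finset (Fin T)).card →
      ∑ t ∈ ({t | pred t = i} : Finset (Fin T)),
          (ℓ (y t) ((i : ℝ) / N) - ℓ (y t) ((j : ℝ) / N)) ≤
        2 * B * ({t | pred t = i} : Finset (Fin T)).card *
          |(∑ t ∈ ({t | pred t = i} : Finset (Fin T)), y t) /
              ({t | pred t = i} : Finset (Fin T)).card - (i : ℝ) / N| := by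
  intro i j hcard
  set s : Finset (Fin T) := ({t | pred t = i} : Finset (Fin T)) with hs
  set c : ℝ := (s.card : ℝ) with hcdef
  have hc0 : (0:ℝ) < c := by rw [hcdef]; exact_mod_cast hcard
  set A : ℝ := ∑ t ∈ s, y t with hAdef
  have hA0 : 0 ≤ A := Finset.sum_nonneg (fun t _ => by rcases hy t with h|h <;> simp [h])
  have hA1 : A ≤ c := by
    have h := Finset.sum_le_card_nsmul s y 1
      (fun t _ => by rcases hy t with h|h <;> simp [h])
    simpa [hcdef, nsmul_eq_mul] using h
  set ρ : ℝ := A / c with hρdef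
  have hρmem : ρ ∈ Set.Icc (0:ℝ) 1 :=
    ⟨div_nonneg hA0 hc0.le, (div_le_one hc0).mpr hA1⟩
  have hNR : (0:ℝ) < N := by exact_mod_cast hN
  have hmem : ∀ k : Fin (N + 1), ((k : ℝ) / N) ∈ Set.Icc (0:ℝ) 1 := by
    intro k
    constructor
    · positivity
    · rw [div_le_one hNR]
      exact_mod_cast Nat.lt_succ_iff.mp k.isLt
  set p : ℝ := (i : ℝ) / N with hpdef
  set q : ℝ := (j : ℝ) / N with hqdef
  have hp := hmem i
  have hq := hmem j
  -- rewrite sums of losses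
  have hsum : ∀ r : ℝ, ∑ t ∈ s, ℓ (y t) r = A * ℓ 1 r + (c - A) * ℓ 0 r := by
    intro r
    have h1 : ∀ t ∈ s, ℓ (y t) r = y t * ℓ 1 r + (1 - y t) * ℓ 0 r := by
      intro t _; rcases hy t with h|h <;> simp [h]
    rw [Finset.sum_congr rfl h1, Finset.sum_add_distrib, ← Finset.sum_mul, ← Finset.sum_mul,
      Finset.sum_sub_distrib, Finset.sum_const, nsmul_eq_mul, mul_one]
  have hLHS : ∑ t ∈ s, (ℓ (y t) p - ℓ (y t) q) =
      A * (ℓ 1 p - ℓ 1 q) + (c - A) * (ℓ 0 p - ℓ 0 q) := by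
    rw [Finset.sum_sub_distrib, hsum p, hsum q]; ring
  -- bounds on loss values
  have hb1p := hbound 1 (by simp) p hp
  have hb0p := hbound 0 (by simp) p hp
  have hb1ρ := hbound 1 (by simp) ρ hρmem
  have hb0ρ := hbound 0 (by simp) ρ hρmem
  -- properness
  have h1 := hproper ρ hρmem q hq
  have h2 := hproper p hp ρ hρmem
  -- per-round key inequality
  have key : ρ * ℓ 1 p + (1 - ρ) * ℓ 0 p - (ρ * ℓ 1 q + (1 - ρ) * ℓ 0 q) ≤
      2 * B * |ρ - p| := by
    rcases abs_cases (ρ - p) with ⟨habs, hsign⟩ | ⟨habs, hsign⟩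
    · rw [habs]
      nlinarith [mul_nonneg (by linarith : (0:ℝ) ≤ ρ - p) (by linarith [hb1p.2] : (0:ℝ) ≤ B - ℓ 1 p),
        mul_nonneg (by linarith : (0:ℝ) ≤ ρ - p) (by linarith [hb0ρ.2] : (0:ℝ) ≤ B - ℓ 0 ρ),
        mul_nonneg (by linarith : (0:ℝ) ≤ ρ - p) hb0p.1,
        mul_nonneg (by linarith : (0:ℝ) ≤ ρ - p) hb1ρ.1]
    · rw [habs]
      nlinarith [mul_nonneg (by linarith : (0:ℝ) ≤ p - ρ) (by linarith [hb0p.2] : (0:ℝ) ≤ B - ℓ 0 p),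
        mul_nonneg (by linarith : (0:ℝ) ≤ p - ρ) (by linarith [hb1ρ.2] : (0:ℝ) ≤ B - ℓ 1 ρ),
        mul_nonneg (by linarith : (0:ℝ) ≤ p - ρ) hb1p.1,
        mul_nonneg (by linarith : (0:ℝ) ≤ p - ρ) hb0ρ.1]
  have hkey' := mul_le_mul_of_nonneg_left key hc0.le
  have hAeq : A = ρ * c := by rw [hρdef, div_mul_cancel₀ A hc0.ne']
  rw [hLHS]
  calc A * (ℓ 1 p - ℓ 1 q) + (c - A) * (ℓ 0 p - ℓ 0 q)
      = c * (ρ * ℓ 1 p + (1 - ρ) * ℓ 0 p - (ρ * ℓ 1 q + (1 - ρ) * ℓ 0 q)) := by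
        rw [hAeq]; ring
    _ ≤ c * (2 * B * |ρ - p|) := hkey'
    _ = 2 * B * c * |ρ - p| := by ring
end

section
/- With notation as above, the internal regret R^int = max_{i,j} Σ_{t: p_t = i/N} (ℓ(y_t, i/N) - ℓ(y_t, j/N)) satisfies R^int ≤ 2B·Σ_{i=0}^N T_i·|ρ(i) - i/N| = 2B·T·C_T, where C_T = Σ_i (T_i/T)·|ρ(i) - i/N| is the ℓ₁ calibration error. -/
open Finset

/-- Internal regret of a calibrated proper-loss forecaster:
every switching gain is bounded by `2B ∑_i T_i |ρ(i) - i/N|`, which equals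
`2B T C_T` where `C_T` is the ℓ₁ calibration error. -/
theorem internal_regret_le_calibration (N T : ℕ) (ℓ : ℝ → ℝ → ℝ) (B : ℝ)
    (y : Fin T → ℝ) (hy : ∀ t, y t = 0 ∨ y t = 1)
    (pred : Fin T → Fin (N + 1))
    (hproper : ∀ p ∈ Set.Icc (0:ℝ) 1, ∀ q ∈ Set.Icc (0:ℝ) 1,
      p * ℓ 1 p + (1 - p) * ℓ 0 p ≤ p * ℓ 1 q + (1 - p) * ℓ 0 q)
    (hbound : ∀ y' ∈ ({0, 1} : Set ℝ), ∀ p ∈ Set.Icc (0:ℝ) 1, 0 ≤ ℓ y' p ∧ ℓ y' p ≤ B)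
    (hB : 0 < B) (hT : 0 < T)
    -- `ρ i` is the empirical frequency on rounds where `i/N` was predicted
    (ρ : Fin (N + 1) → ℝ)
    (hρ : ∀ i, 0 < ({t | pred t = i} : Finset (Fin T)).card →
      ρ i = (∑ t ∈ ({t | pred t = i} : Finset (Fin T)), y t) /
        ({t | pred t = i} : Finset (Fin T)).card)
    -- the summand is taken to be `0` when `T_i = 0`
    (hρ0 : ∀ i, ({t | pred t = i} : Finset (Fin T)).card = 0 → ρ i = (i : ℝ) / N) :
    (∀ i j : Fin (N + 1),
      ∑ t ∈ ({t | pred t = i} : Finset (Fin T)),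
          (ℓ (y t) ((i : ℝ) / N) - ℓ (y t) ((j : ℝ) / N)) ≤
        2 * B * ∑ i' : Fin (N + 1),
          (({t | pred t = i'} : Finset (Fin T)).card : ℝ) * |ρ i' - (i' : ℝ) / N|) ∧
    2 * B * (∑ i' : Fin (N + 1),
        (({t | pred t = i'} : Finset (Fin T)).card : ℝ) * |ρ i' - (i' : ℝ) / N|) =
      2 * B * T * ∑ i' : Fin (N + 1),
        ((({t | pred t = i'} : Finset (Fin T)).card : ℝ) / T) * |ρ i' - (i' : ℝ) / N| := by
  have hpmem : ∀ i : Fin (N + 1), (i : ℝ) / N ∈ Set.Icc (0:ℝ) 1 := by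
    intro i
    rcases Nat.eq_zero_or_pos N with h | h
    · subst h
      have : (i : ℕ) = 0 := Nat.lt_one_iff.mp i.isLt
      simp [this]
    · have hN : (0:ℝ) < N := by exact_mod_cast h
      constructor
      · positivity
      · rw [div_le_one hN]
        exact_mod_cast Nat.lt_succ_iff.mp i.isLt
  have hdiff : ∀ i : Fin (N + 1), |ℓ 1 ((i : ℝ) / N) - ℓ 0 ((i : ℝ) / N)| ≤ B := by
    intro i
    have h1 := hbound 1 (by simp) _ (hpmem i)
    have h0 := hbound 0 (by simp) _ (hpmem i)
    rw [abs_sub_le_iff]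
    constructor <;> linarith [h1.1, h1.2, h0.1, h0.2]
  constructor
  · intro i j
    set S := ({t | pred t = i} : Finset (Fin T)) with hS
    set Ti := (S.card : ℝ) with hTi
    set pi := (i : ℝ) / N with hpi
    set pj := (j : ℝ) / N with hpj
    set r := ρ i with hr
    have hM : ∑ t ∈ S, y t = Ti * r := by
      rcases Nat.eq_zero_or_pos S.card with h | h
      · rw [Finset.card_eq_zero.mp h]
        simp [hTi, h]
      · rw [hr, hρ i h]
        have hne : Ti ≠ 0 := by
          simp only [hTi]
          exact_mod_cast h.ne'
        rw [hTi] at hne ⊢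
        field_simp
        exact (mul_div_cancel_left₀ _ hne).symm
    have key : ∑ t ∈ S, (ℓ (y t) pi - ℓ (y t) pj)
        = Ti * (r * (ℓ 1 pi - ℓ 1 pj) + (1 - r) * (ℓ 0 pi - ℓ 0 pj)) := by
      have hterm : ∀ t ∈ S, ℓ (y t) pi - ℓ (y t) pj
          = y t * (ℓ 1 pi - ℓ 1 pj) + (1 - y t) * (ℓ 0 pi - ℓ 0 pj) := by
        intro t _
        rcases hy t with h | h <;> rw [h] <;> ring
      rw [Finset.sum_congr rfl hterm, Finset.sum_add_distrib, ← Finset.sum_mul,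
        ← Finset.sum_mul, hM, Finset.sum_sub_distrib, hM, Finset.sum_const,
        nsmul_eq_mul, mul_one]
      ring
    have hstep : r * (ℓ 1 pi - ℓ 1 pj) + (1 - r) * (ℓ 0 pi - ℓ 0 pj)
        ≤ 2 * B * |r - pi| := by
      have hp := hproper pi (hpmem i) pj (hpmem j)
      have h1 := hdiff i
      have h2 := hdiff j
      have ha : (r - pi) * (ℓ 1 pi - ℓ 0 pi) ≤ |r - pi| * B := by
        calc (r - pi) * (ℓ 1 pi - ℓ 0 pi) ≤ |(r - pi) * (ℓ 1 pi - ℓ 0 pi)| := le_abs_self _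
          _ = |r - pi| * |ℓ 1 pi - ℓ 0 pi| := abs_mul _ _
          _ ≤ |r - pi| * B := mul_le_mul_of_nonneg_left h1 (abs_nonneg _)
      have hb : -((r - pi) * (ℓ 1 pj - ℓ 0 pj)) ≤ |r - pi| * B := by
        calc -((r - pi) * (ℓ 1 pj - ℓ 0 pj)) ≤ |(r - pi) * (ℓ 1 pj - ℓ 0 pj)| :=
              neg_le_abs _
          _ = |r - pi| * |ℓ 1 pj - ℓ 0 pj| := abs_mul _ _
          _ ≤ |r - pi| * B := mul_le_mul_of_nonneg_left h2 (abs_nonneg _)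
      have hid : r * (ℓ 1 pi - ℓ 1 pj) + (1 - r) * (ℓ 0 pi - ℓ 0 pj)
          = (r - pi) * (ℓ 1 pi - ℓ 0 pi) - (r - pi) * (ℓ 1 pj - ℓ 0 pj)
            + ((pi * ℓ 1 pi + (1 - pi) * ℓ 0 pi) - (pi * ℓ 1 pj + (1 - pi) * ℓ 0 pj)) := by
        ring
      linarith
    have hTi0 : 0 ≤ Ti := by positivity
    have hsingle : Ti * |r - pi|
        ≤ ∑ i' : Fin (N + 1),
            (({t | pred t = i'} : Finset (Fin T)).card : ℝ) * |ρ i' - (i' : ℝ) / N| := by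
      exact Finset.single_le_sum (f := fun i' : Fin (N + 1) =>
          (({t | pred t = i'} : Finset (Fin T)).card : ℝ) * |ρ i' - (i' : ℝ) / N|)
        (fun i' _ => by positivity) (Finset.mem_univ i)
    calc ∑ t ∈ S, (ℓ (y t) pi - ℓ (y t) pj)
        = Ti * (r * (ℓ 1 pi - ℓ 1 pj) + (1 - r) * (ℓ 0 pi - ℓ 0 pj)) := key
      _ ≤ Ti * (2 * B * |r - pi|) := mul_le_mul_of_nonneg_left hstep hTi0
      _ = 2 * B * (Ti * |r - pi|) := by ring
      _ ≤ 2 * B * ∑ i' : Fin (N + 1),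
            (({t | pred t = i'} : Finset (Fin T)).card : ℝ) * |ρ i' - (i' : ℝ) / N| := by
          exact mul_le_mul_of_nonneg_left hsingle (by positivity)
  · have hT' : (T : ℝ) ≠ 0 := by exact_mod_cast hT.ne'
    rw [Finset.mul_sum, Finset.mul_sum]
    refine Finset.sum_congr rfl fun i' _ => ?_
    field_simp
end

section
/- Let ℓ be convex in the first argument and for each j ∈ {1,…,M}, suppose the calibration error of sub-forecaster j satisfies C^(j) = Σ_{i=0}^N (T_{j,i}/T_j)·ℓ(ρ_{j,i}, i/N) ≤ R_j + ε, where T_j = Σ_i T_{j,i} > 0. Then the merged forecaster's calibration error C = Σ_{i=0}^N ((Σ_j T_{j,i})/T)·ℓ(ρ_i, i/N), where T = Σ_j T_j and ρ_i = (Σ_j T_{j,i}·ρ_{j,i})/(Σ_j T_{j,i}) (taking the term to be 0 when Σ_j T_{j,i} = 0), satisfies C ≤ Σ_{j=1}^M (T_j/T)·R_j + ε. -/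
open Finset

/-- Calibration of the merged forecaster: if each sub-forecaster `j` has
calibration error `C^(j) ≤ R_j + ε` (measured by a loss `ℓ` convex in its first
argument), then the merged forecaster satisfies `C ≤ ∑_j (T_j/T) R_j + ε`. -/
theorem merged_calibration_bound (M N : ℕ) (ℓ : ℝ → ℝ → ℝ)
    (hℓ0 : ∀ r ∈ Set.Icc (0:ℝ) 1, ∀ x ∈ Set.Icc (0:ℝ) 1, 0 ≤ ℓ r x)
    (hconv : ∀ x ∈ Set.Icc (0:ℝ) 1, ConvexOn ℝ (Set.Icc (0:ℝ) 1) (fun r => ℓ r x))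
    (Tji : Fin M → Fin (N + 1) → ℕ)
    (ρj : Fin M → Fin (N + 1) → ℝ) (hρj : ∀ j i, ρj j i ∈ Set.Icc (0:ℝ) 1)
    (R : Fin M → ℝ) (hR : ∀ j, 0 ≤ R j) (ε : ℝ) (hε : 0 ≤ ε)
    (Tj : Fin M → ℕ) (hTj : ∀ j, Tj j = ∑ i, Tji j i) (hTjpos : ∀ j, 0 < Tj j)
    (T : ℕ) (hT : T = ∑ j, Tj j)
    (hN : 0 < N)
    (hcal : ∀ j, ∑ i : Fin (N + 1),
      ((Tji j i : ℝ) / (Tj j : ℝ)) * ℓ (ρj j i) ((i : ℝ) / N) ≤ R j + ε) :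
    ∑ i : Fin (N + 1),
        (if (∑ j, Tji j i) = 0 then 0 else
          ((∑ j, (Tji j i : ℝ)) / (T : ℝ)) *
            ℓ ((∑ j, (Tji j i : ℝ) * ρj j i) / (∑ j, (Tji j i : ℝ))) ((i : ℝ) / N)) ≤
      ∑ j, ((Tj j : ℝ) / (T : ℝ)) * R j + ε := by
  have hTnn : (0:ℝ) ≤ (T:ℝ) := Nat.cast_nonneg T
  have hxmem : ∀ i : Fin (N+1), ((i:ℝ)/N) ∈ Set.Icc (0:ℝ) 1 := by
    intro i
    constructor
    · positivity
    · rw [div_le_one (by exact_mod_cast hN)]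
      exact_mod_cast Nat.lt_succ_iff.mp i.isLt
  have key : ∀ i : Fin (N+1),
      (if (∑ j, Tji j i) = 0 then 0 else
        ((∑ j, (Tji j i : ℝ)) / (T : ℝ)) *
          ℓ ((∑ j, (Tji j i : ℝ) * ρj j i) / (∑ j, (Tji j i : ℝ))) ((i : ℝ) / N)) ≤
      ∑ j, ((Tji j i : ℝ) / (T:ℝ)) * ℓ (ρj j i) ((i:ℝ)/N) := by
    intro i
    by_cases h : (∑ j, Tji j i) = 0
    · simp only [h, if_true]
      apply Finset.sum_nonneg
      intro j _
      have : Tji j i = 0 := by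
        have := (Finset.sum_eq_zero_iff).mp h j (mem_univ j)
        exact this
      simp [this]
    · rw [if_neg h]
      set s : ℝ := ∑ j, (Tji j i : ℝ) with hs
      have hspos : 0 < s := by
        have : 0 < ∑ j, Tji j i := Nat.pos_of_ne_zero h
        rw [hs]
        exact_mod_cast (by push_cast; exact_mod_cast this : (0:ℝ) < ((∑ j, Tji j i : ℕ) : ℝ))
      have hw1 : ∑ j, (Tji j i : ℝ) / s = 1 := by
        rw [← Finset.sum_div, ← hs, div_self hspos.ne']
      have hjensen := (hconv _ (hxmem i)).map_sum_le
        (t := Finset.univ) (w := fun j => (Tji j i : ℝ) / s) (p := fun j => ρj j i)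
        (fun j _ => by positivity) hw1 (fun j _ => hρj j i)
      have havg : (∑ j, ((Tji j i : ℝ) / s) • ρj j i)
          = (∑ j, (Tji j i : ℝ) * ρj j i) / s := by
        rw [Finset.sum_div]
        congr 1; ext j; rw [smul_eq_mul]; ring
      rw [havg] at hjensen
      calc (s / (T:ℝ)) * ℓ ((∑ j, (Tji j i : ℝ) * ρj j i) / s) ((i:ℝ)/N)
          ≤ (s / (T:ℝ)) * ∑ j, ((Tji j i : ℝ) / s) • ℓ (ρj j i) ((i:ℝ)/N) := by
            apply mul_le_mul_of_nonneg_left hjensen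
            positivity
        _ = ∑ j, ((Tji j i : ℝ) / (T:ℝ)) * ℓ (ρj j i) ((i:ℝ)/N) := by
            rw [Finset.mul_sum]
            congr 1; ext j; rw [smul_eq_mul]
            field_simp
  calc ∑ i : Fin (N + 1),
        (if (∑ j, Tji j i) = 0 then 0 else
          ((∑ j, (Tji j i : ℝ)) / (T : ℝ)) *
            ℓ ((∑ j, (Tji j i : ℝ) * ρj j i) / (∑ j, (Tji j i : ℝ))) ((i : ℝ) / N))
      ≤ ∑ i : Fin (N+1), ∑ j, ((Tji j i : ℝ) / (T:ℝ)) * ℓ (ρj j i) ((i:ℝ)/N) :=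
        Finset.sum_le_sum (fun i _ => key i)
    _ = ∑ j, ((Tj j : ℝ)/(T:ℝ)) * ∑ i : Fin (N+1),
          ((Tji j i : ℝ) / (Tj j : ℝ)) * ℓ (ρj j i) ((i:ℝ)/N) := by
        rw [Finset.sum_comm]
        congr 1; ext j
        rw [Finset.mul_sum]
        congr 1; ext i
        have hTjne : (Tj j : ℝ) ≠ 0 := by exact_mod_cast (hTjpos j).ne'
        field_simp
    _ ≤ ∑ j, ((Tj j : ℝ)/(T:ℝ)) * (R j + ε) := by
        apply Finset.sum_le_sum
        intro j _
        apply mul_le_mul_of_nonneg_left (hcal j)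
        positivity
    _ = ∑ j, ((Tj j : ℝ)/(T:ℝ)) * R j + (∑ j, (Tj j : ℝ)/(T:ℝ)) * ε := by
        rw [Finset.sum_mul, ← Finset.sum_add_distrib]
        congr 1; ext j; ring
    _ ≤ ∑ j, ((Tj j : ℝ) / (T : ℝ)) * R j + ε := by
        gcongr
        have : (∑ j, (Tj j : ℝ)/(T:ℝ)) = (T:ℝ)/(T:ℝ) := by
          rw [← Finset.sum_div, hT]; push_cast; ring_nf
        calc (∑ j, (Tj j : ℝ)/(T:ℝ)) * ε ≤ 1 * ε := by
              apply mul_le_mul_of_nonneg_right _ hε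
              rw [this]; exact div_self_le_one _
          _ = ε := one_mul ε
  done
end

section
/- If ℓ : [0,1] × [0,1] → ℝ≥0 is continuous, convex in its first argument, and ℓ(x,x) = 0 with ℓ(x,y) > 0 for x ≠ y, then for every ε > 0 there exists δ > 0 such that for all weights w_i ∈ [0,1] with Σ w_i ≤ 1 and all ρ_i, x_i ∈ [0,1] (i = 0,…,N): Σ_i w_i·ℓ(ρ_i, x_i) ≤ δ implies Σ_i w_i·|ρ_i - x_i| ≤ ε. -/
open Finset

/-- If `ℓ` is continuous on `[0,1]²`, convex in its first argument, vanishes on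
the diagonal and is positive off it, then small weighted `ℓ`-calibration error
implies small weighted ℓ₁ calibration error. -/
theorem calibration_transfer (N : ℕ) (ℓ : ℝ → ℝ → ℝ)
    (hcont : ContinuousOn (fun z : ℝ × ℝ => ℓ z.1 z.2)
      (Set.Icc (0:ℝ) 1 ×ˢ Set.Icc (0:ℝ) 1))
    (hconv : ∀ x ∈ Set.Icc (0:ℝ) 1, ConvexOn ℝ (Set.Icc (0:ℝ) 1) (fun r => ℓ r x))
    (hℓ0 : ∀ x ∈ Set.Icc (0:ℝ) 1, ∀ y ∈ Set.Icc (0:ℝ) 1, 0 ≤ ℓ x y)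
    (hdiag : ∀ x ∈ Set.Icc (0:ℝ) 1, ℓ x x = 0)
    (hpos : ∀ x ∈ Set.Icc (0:ℝ) 1, ∀ y ∈ Set.Icc (0:ℝ) 1, x ≠ y → 0 < ℓ x y) :
    ∀ ε > (0:ℝ), ∃ δ > (0:ℝ), ∀ w ρ x : Fin (N + 1) → ℝ,
      (∀ i, w i ∈ Set.Icc (0:ℝ) 1) → (∑ i, w i) ≤ 1 →
      (∀ i, ρ i ∈ Set.Icc (0:ℝ) 1 ∧ x i ∈ Set.Icc (0:ℝ) 1) →
      (∑ i, w i * ℓ (ρ i) (x i)) ≤ δ →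
      (∑ i, w i * |ρ i - x i|) ≤ ε := by
  intro ε hε
  set t : ℝ := min (ε / 2) 1 with ht
  have ht0 : 0 < t := lt_min (by linarith) one_pos
  have ht1 : t ≤ 1 := min_le_right _ _
  have hte : t ≤ ε / 2 := min_le_left _ _
  set K : Set (ℝ × ℝ) := (Set.Icc (0:ℝ) 1 ×ˢ Set.Icc (0:ℝ) 1) ∩
      {z : ℝ × ℝ | t ≤ |z.1 - z.2|} with hK
  have hKcl : IsClosed {z : ℝ × ℝ | t ≤ |z.1 - z.2|} :=
    isClosed_le continuous_const ((continuous_fst.sub continuous_snd).abs)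
  have hKc : IsCompact K := (isCompact_Icc.prod isCompact_Icc).inter_right hKcl
  have hKne : K.Nonempty := by
    refine ⟨((0:ℝ), (1:ℝ)), ⟨⟨Set.left_mem_Icc.2 zero_le_one,
      Set.right_mem_Icc.2 zero_le_one⟩, ?_⟩⟩
    simp only [Set.mem_setOf_eq]
    rw [show |(0:ℝ) - 1| = 1 by norm_num]
    exact ht1
  have hKsub : K ⊆ Set.Icc (0:ℝ) 1 ×ˢ Set.Icc (0:ℝ) 1 := Set.inter_subset_left
  obtain ⟨z0, hz0K, hz0min⟩ := hKc.exists_isMinOn hKne (hcont.mono hKsub)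
  set c : ℝ := ℓ z0.1 z0.2 with hc
  have hz0ne : z0.1 ≠ z0.2 := by
    intro h
    have := hz0K.2
    simp only [Set.mem_setOf_eq, h, sub_self, abs_zero] at this
    linarith
  have hcpos : 0 < c := hpos z0.1 hz0K.1.1 z0.2 hz0K.1.2 hz0ne
  refine ⟨c * (ε / 2), by positivity, ?_⟩
  intro w ρ x hw hwsum hρx hsum
  have hwnn : ∀ i, 0 ≤ w i := fun i => (hw i).1
  have key : ∀ i, w i * |ρ i - x i| ≤ w i * t + w i * ℓ (ρ i) (x i) / c := by
    intro i
    obtain ⟨hρi, hxi⟩ := hρx i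
    have hd1 : |ρ i - x i| ≤ 1 := by
      rw [abs_sub_le_iff]
      constructor <;> [skip; skip] <;>
        (obtain ⟨h1, h2⟩ := hρi; obtain ⟨h3, h4⟩ := hxi; linarith)
    have hℓnn : 0 ≤ ℓ (ρ i) (x i) := hℓ0 _ hρi _ hxi
    by_cases h : t ≤ |ρ i - x i|
    · have hmem : ((ρ i, x i) : ℝ × ℝ) ∈ K := ⟨⟨hρi, hxi⟩, h⟩
      have hge : c ≤ ℓ (ρ i) (x i) := hz0min hmem
      have h1 : w i * |ρ i - x i| ≤ w i * ℓ (ρ i) (x i) / c := by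
        rw [le_div_iff₀ hcpos]
        have hw0 := hwnn i
        nlinarith [mul_nonneg hw0 (sub_nonneg.2 hge),
          mul_nonneg (mul_nonneg hw0 hcpos.le) (sub_nonneg.2 hd1)]
      have : 0 ≤ w i * t := mul_nonneg (hwnn i) ht0.le
      linarith
    · push_neg at h
      have h1 : w i * |ρ i - x i| ≤ w i * t :=
        mul_le_mul_of_nonneg_left h.le (hwnn i)
      have : 0 ≤ w i * ℓ (ρ i) (x i) / c :=
        div_nonneg (mul_nonneg (hwnn i) hℓnn) hcpos.le
      linarith
  calc ∑ i, w i * |ρ i - x i|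
      ≤ ∑ i, (w i * t + w i * ℓ (ρ i) (x i) / c) := Finset.sum_le_sum fun i _ => key i
    _ = (∑ i, w i) * t + (∑ i, w i * ℓ (ρ i) (x i)) / c := by
        rw [Finset.sum_add_distrib, ← Finset.sum_mul, ← Finset.sum_div]
    _ ≤ 1 * t + (c * (ε / 2)) / c := by
        gcongr <;> first
          | exact ht0.le
          | exact hwsum
          | exact hsum
          | exact Finset.sum_nonneg fun i _ =>
              mul_nonneg (hwnn i) (hℓ0 _ (hρx i).1 _ (hρx i).2)
    _ = t + ε / 2 := by field_simp
    _ ≤ ε := by linarith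
end
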